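/- If A is symmetric with respect to the M_f inner product (i.e., M_f A is a symmetric matrix), then the coarsened operator C(A) = R A I is symmetric with respect to the M_c inner product (i.e., M_c C(A) is symmetric). -/

import Mathlib

open Matrix

lemma coarse_posdef {nc nf : ℕ}
    (Mf : Matrix (Fin nf) (Fin nf) ℝ) (hMf : Mf.PosDef)
    (I : Matrix (Fin nf) (Fin nc) ℝ) (hI : Function.Injective I.mulVec) :
    (Iᵀ * Mf * I).PosDef := by
  refine Matrix.PosDef.of_dotProduct_mulVec_pos ?_ ?_
  · simpa [Matrix.mul_assoc] using Matrix.isHermitian_conjTranspose_mul_mul I hMf.isHermitian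
  · intro x hx
    have hIx : I.mulVec x ≠ 0 := fun h => hx (hI (h.trans (Matrix.mulVec_zero I).symm))
    have := hMf.dotProduct_mulVec_pos hIx
    simpa [Matrix.mul_assoc, ← Matrix.mulVec_mulVec, Matrix.dotProduct_mulVec,
      Matrix.vecMul_transpose] using this

/-- If `A` is symmetric with respect to the `M_f` inner product, then the coarsened
operator `C(A) = R A I` is symmetric with respect to the `M_c` inner product. -/
theorem coarsened_operator_symm {nc nf : ℕ}
    (Mf : Matrix (Fin nf) (Fin nf) ℝ) (hMf : Mf.PosDef)
    (I : Matrix (Fin nf) (Fin nc) ℝ) (hI : Function.Injective I.mulVec)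
    (A : Matrix (Fin nf) (Fin nf) ℝ) (hA : (Mf * A).IsSymm) :
    ((Iᵀ * Mf * I) * (((Iᵀ * Mf * I)⁻¹ * Iᵀ * Mf) * A * I)).IsSymm := by
  have hMc : (Iᵀ * Mf * I).PosDef := coarse_posdef Mf hMf I hI
  have hinv : (Iᵀ * Mf * I) * (Iᵀ * Mf * I)⁻¹ = 1 :=
    Matrix.mul_nonsing_inv _ (Ne.isUnit hMc.det_pos.ne')
  have key : Aᵀ * Mfᵀ = Mf * A := by rw [← Matrix.transpose_mul]; exact hA
  have heq : ((Iᵀ * Mf * I) * (((Iᵀ * Mf * I)⁻¹ * Iᵀ * Mf) * A * I))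
      = Iᵀ * (Mf * A) * I := by
    simp only [← Matrix.mul_assoc]
    rw [hinv, Matrix.one_mul, Matrix.mul_assoc Iᵀ Mf A]
  rw [heq]
  unfold Matrix.IsSymm
  simp only [Matrix.transpose_mul, Matrix.transpose_transpose]
  rw [key, ← Matrix.mul_assoc]
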